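/- Let m ≥ 1, let T be a non-self-overlapping m-bit template, and let B be drawn uniformly at random from the 2^M equiprobable M-bit blocks. For a position k with 0 ≤ k ≤ M−m, let I_k be the indicator that B(k+i) = T(i) for all i < m. Then for positions k, l with 0 ≤ k, l ≤ M−m: E[I_k I_l] = 1/2^m if k = l; E[I_k I_l] = 0 if 1 ≤ |k−l| ≤ m−1; and E[I_k I_l] = 1/2^{2m} if |k−l| ≥ m. -/

import Mathlib

open scoped Classical

/-- `T` occurs in the block `B` at position `k`: `B (k+i) = T i` for all `i < m`. -/
def occursAt {m M : ℕ} (T : Fin m → Bool) (B : Fin M → Bool) (k : ℕ) : Prop :=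
  ∀ i : Fin m, ∀ h : k + i.1 < M, B ⟨k + i.1, h⟩ = T i

/-- `T` is non-self-overlapping: for every `1 ≤ k ≤ m-1` the length-`(m-k)` prefix of `T`
differs from its length-`(m-k)` suffix. -/
def NonSelfOverlapping {m : ℕ} (T : Fin m → Bool) : Prop :=
  ∀ k : ℕ, 1 ≤ k → k ≤ m - 1 → ∃ i : ℕ, ∃ h : i < m - k,
    T ⟨i, by omega⟩ ≠ T ⟨i + k, by omega⟩

/-- Expectation of `f` when the block is drawn uniformly from the `2^M` `M`-bit blocks. -/
noncomputable def unifExp (M : ℕ) (f : (Fin M → Bool) → ℝ) : ℝ :=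
  (∑ B : Fin M → Bool, f B) / 2 ^ M

def win (m M k : ℕ) (h : k + m ≤ M) : Finset (Fin M) :=
  Finset.univ.map ⟨fun i : Fin m => ⟨k + i.1, by omega⟩, fun a b hab => by
    simp only [Fin.ext_iff] at hab ⊢; omega⟩

lemma mem_win {m M k : ℕ} {h : k + m ≤ M} {j : Fin M} :
    j ∈ win m M k h ↔ k ≤ j.1 ∧ j.1 < k + m := by
  simp only [win, Finset.mem_map, Finset.mem_univ, true_and, Function.Embedding.coeFn_mk]
  constructor
  · rintro ⟨i, rfl⟩
    have := i.2
    change k ≤ k + i.1 ∧ k + i.1 < k + m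
    constructor <;> omega
  · rintro ⟨h1, h2⟩
    refine ⟨⟨j.1 - k, by omega⟩, ?_⟩
    ext
    change k + (j.1 - k) = j.1
    omega

lemma card_win {m M k : ℕ} (h : k + m ≤ M) : (win m M k h).card = m := by
  simp [win]

def wfun (m M k : ℕ) (T : Fin m → Bool) : Fin M → Bool :=
  fun j => if h : k ≤ j.1 ∧ j.1 < k + m then T ⟨j.1 - k, by omega⟩ else false

lemma occursAt_iff {m M k : ℕ} (hk : k + m ≤ M) (T : Fin m → Bool) (B : Fin M → Bool) :
    occursAt T B k ↔ ∀ j ∈ win m M k hk, B j = wfun m M k T j := by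
  constructor
  · intro H j hj
    rw [mem_win] at hj
    rw [wfun, dif_pos hj]
    have := H ⟨j.1 - k, by omega⟩ (by omega : k + (j.1 - k) < M)
    convert this using 2
    ext
    simp
    omega
  · intro H i h
    have hmem : (⟨k + i.1, h⟩ : Fin M) ∈ win m M k hk := by
      rw [mem_win]; constructor <;> simp <;> omega
    have := H _ hmem
    rw [this, wfun, dif_pos (by constructor <;> simp <;> omega)]
    congr 1
    ext
    simp

lemma card_constrained (M : ℕ) (S : Finset (Fin M)) (f : Fin M → Bool) :
    (Finset.univ.filter (fun B : Fin M → Bool => ∀ j ∈ S, B j = f j)).card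
      = 2 ^ (M - S.card) := by
  have e : {B : Fin M → Bool // ∀ j ∈ S, B j = f j} ≃ ({j : Fin M // j ∉ S} → Bool) :=
    { toFun := fun B j => B.1 j.1
      invFun := fun g => ⟨fun j => if h : j ∈ S then f j else g ⟨j, h⟩,
        fun j hj => dif_pos hj⟩
      left_inv := by
        rintro ⟨B, hB⟩
        ext j
        dsimp
        split
        · exact (hB j ‹_›).symm
        · rfl
      right_inv := by
        intro g
        ext j
        exact dif_neg j.2 }
  have h2 : Fintype.card {j : Fin M // j ∉ S} = M - S.card := by
    rw [Fintype.card_subtype]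
    have : Finset.univ.filter (fun j : Fin M => j ∉ S) = Sᶜ := by
      ext j; simp
    rw [this, Finset.card_compl]
    simp
  have h1 : Fintype.card {B : Fin M → Bool // ∀ j ∈ S, B j = f j} = 2 ^ (M - S.card) := by
    rw [Fintype.card_congr e, Fintype.card_fun, h2]
    simp
  rw [← h1, Fintype.card_subtype]

lemma unifExp_eq (M : ℕ) (P : (Fin M → Bool) → Prop) (S : Finset (Fin M)) (f : Fin M → Bool)
    (h : ∀ B, P B ↔ ∀ j ∈ S, B j = f j) :
    unifExp M (fun B => if P B then (1:ℝ) else 0) = 1 / 2 ^ S.card := by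
  have hS : S.card ≤ M := by simpa using Finset.card_le_univ S
  unfold unifExp
  rw [Finset.sum_boole]
  have heq : (Finset.univ.filter P) =
      Finset.univ.filter (fun B => ∀ j ∈ S, B j = f j) := by
    apply Finset.filter_congr
    intro B _
    exact iff_iff_eq.mp (h B) ▸ Iff.rfl
  rw [heq, card_constrained]
  rw [div_eq_div_iff (by positivity) (by positivity)]
  push_cast
  rw [one_mul, ← pow_add]
  congr 1
  omega

lemma no_overlap {m M k l : ℕ} (T : Fin m → Bool) (hT : NonSelfOverlapping T)
    (hkl : k < l) (hd : l - k ≤ m - 1) (hl : l + m ≤ M) (B : Fin M → Bool) :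
    ¬(occursAt T B k ∧ occursAt T B l) := by
  rintro ⟨Hk, Hl⟩
  obtain ⟨i, hi, hne⟩ := hT (l - k) (by omega) hd
  have h1 := Hk ⟨i + (l - k), by omega⟩ (by omega : k + (i + (l - k)) < M)
  have h2 := Hl ⟨i, by omega⟩ (by omega : l + i < M)
  apply hne
  rw [← h2, ← h1]
  congr 1
  ext
  simp
  omega

def wfun2 (m M k l : ℕ) (T : Fin m → Bool) : Fin M → Bool :=
  fun j => if h : k ≤ j.1 ∧ j.1 < k + m then T ⟨j.1 - k, by omega⟩
    else if h' : l ≤ j.1 ∧ j.1 < l + m then T ⟨j.1 - l, by omega⟩ else false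

lemma prod_if (P Q : Prop) :
    (if P then (1:ℝ) else 0) * (if Q then (1:ℝ) else 0) = if P ∧ Q then 1 else 0 := by
  split_ifs <;> simp_all


theorem expectation_indicator_products (m M k l : ℕ) (hm : 1 ≤ m) (T : Fin m → Bool)
    (hT : NonSelfOverlapping T) (hk : k + m ≤ M) (hl : l + m ≤ M) :
    (k = l →
      unifExp M (fun B => (if occursAt T B k then (1:ℝ) else 0) *
        (if occursAt T B l then (1:ℝ) else 0)) = 1 / 2 ^ m) ∧
    (1 ≤ Nat.dist k l → Nat.dist k l ≤ m - 1 →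
      unifExp M (fun B => (if occursAt T B k then (1:ℝ) else 0) *
        (if occursAt T B l then (1:ℝ) else 0)) = 0) ∧
    (m ≤ Nat.dist k l →
      unifExp M (fun B => (if occursAt T B k then (1:ℝ) else 0) *
        (if occursAt T B l then (1:ℝ) else 0)) = 1 / 2 ^ (2 * m)) := by
  have hprod : (fun B : Fin M → Bool => (if occursAt T B k then (1:ℝ) else 0) *
      (if occursAt T B l then (1:ℝ) else 0)) =
      fun B => if occursAt T B k ∧ occursAt T B l then (1:ℝ) else 0 := by
    funext B; exact prod_if _ _
  refine ⟨?_, ?_, ?_⟩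
  · rintro rfl
    rw [hprod]
    have := unifExp_eq M (fun B => occursAt T B k ∧ occursAt T B k)
      (win m M k hk) (wfun m M k T) (fun B =>
        ⟨fun hp => (occursAt_iff hk T B).mp hp.1,
         fun hq => ⟨(occursAt_iff hk T B).mpr hq, (occursAt_iff hk T B).mpr hq⟩⟩)
    simpa [card_win] using this
  · intro h1 h2
    have hno : ∀ B : Fin M → Bool, ¬(occursAt T B k ∧ occursAt T B l) := by
      intro B
      have hd := Nat.dist_eq k l
      rcases lt_trichotomy k l with hlt | heq | hgt
      · exact no_overlap T hT hlt (by simp [Nat.dist] at h2 ⊢; omega) hl B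
      · exfalso; simp [heq, Nat.dist_self] at h1
      · intro hc
        exact no_overlap T hT hgt (by simp [Nat.dist] at h2 ⊢; omega) hk B ⟨hc.2, hc.1⟩
    rw [hprod]
    unfold unifExp
    rw [Finset.sum_eq_zero, zero_div]
    intro B _
    simp [hno B]
  · intro hd
    have hdisj : Disjoint (win m M k hk) (win m M l hl) := by
      rw [Finset.disjoint_left]
      intro j hj hj'
      rw [mem_win] at hj hj'
      simp [Nat.dist] at hd
      omega
    have hcard : (win m M k hk ∪ win m M l hl).card = 2 * m := by
      rw [Finset.card_union_of_disjoint hdisj, card_win, card_win]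
      omega
    have hnotk : ∀ j : Fin M, l ≤ j.1 → j.1 < l + m → ¬(k ≤ j.1 ∧ j.1 < k + m) := by
      intro j hj1 hj2
      simp [Nat.dist] at hd
      omega
    have hiff : ∀ B : Fin M → Bool, (occursAt T B k ∧ occursAt T B l) ↔
        ∀ j ∈ win m M k hk ∪ win m M l hl, B j = wfun2 m M k l T j := by
      intro B
      rw [occursAt_iff hk T B, occursAt_iff hl T B, Finset.forall_mem_union]
      have e1 : ∀ j ∈ win m M k hk, wfun2 m M k l T j = wfun m M k T j := by
        intro j hj
        rw [mem_win] at hj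
        simp only [wfun2, wfun]
        rw [dif_pos hj, dif_pos hj]
      have e2 : ∀ j ∈ win m M l hl, wfun2 m M k l T j = wfun m M l T j := by
        intro j hj
        rw [mem_win] at hj
        simp only [wfun2, wfun]
        rw [dif_neg (hnotk j hj.1 hj.2), dif_pos hj]
      constructor
      · rintro ⟨Hk, Hl⟩
        exact ⟨fun j hj => (Hk j hj).trans (e1 j hj).symm,
               fun j hj => (Hl j hj).trans (e2 j hj).symm⟩
      · rintro ⟨Hk, Hl⟩
        exact ⟨fun j hj => (Hk j hj).trans (e1 j hj),
               fun j hj => (Hl j hj).trans (e2 j hj)⟩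
    rw [hprod]
    rw [show (1:ℝ) / 2 ^ (2*m) = 1 / 2 ^ (win m M k hk ∪ win m M l hl).card by rw [hcard]]
    refine Eq.trans ?_ (unifExp_eq M (fun C => occursAt T C k ∧ occursAt T C l)
      (win m M k hk ∪ win m M l hl) (wfun2 m M k l T) hiff)
    congr 1
    funext B
    congr
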